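/- Let X be a finite almost-simple group with socle S, i.e., S is a normal subgroup of X that is a nonabelian simple group and the centralizer of S in X is trivial. Let H be a maximal subgroup of S that is X-ordinary, meaning that for every x in X there exists s in S with x H x^{-1} = s H s^{-1}. Then the normalizer N_X(H) of H in X is a maximal subgroup of X, and N_X(H) ∩ S = H. -/

import Mathlib

/-- The conjugate `x H x⁻¹` of a subgroup `H` by an element `x`. -/
def conjSubgroup {X : Type*} [Group X] (x : X) (H : Subgroup X) : Subgroup X :=
  H.map (MulAut.conj x).toMonoidHom

lemma conjSubgroup_mul {X : Type*} [Group X] (a b : X) (H : Subgroup X) :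
    conjSubgroup (a * b) H = conjSubgroup a (conjSubgroup b H) := by
  unfold conjSubgroup
  rw [Subgroup.map_map]
  congr 1
  ext x
  simp [mul_assoc]

lemma conjSubgroup_one {X : Type*} [Group X] (H : Subgroup X) :
    conjSubgroup 1 H = H := by
  unfold conjSubgroup
  ext x
  simp

lemma mem_normalizer_of_conjSubgroup_eq {X : Type*} [Group X] {x : X} {H : Subgroup X}
    (h : conjSubgroup x H = H) : x ∈ (Subgroup.normalizer (H : Set X)) := by
  rw [Subgroup.mem_normalizer_iff]
  intro n
  constructor
  · intro hn
    have : x * n * x⁻¹ ∈ conjSubgroup x H := ⟨n, hn, by simp [mul_assoc]⟩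
    rwa [h] at this
  · intro hn
    rw [← h] at hn
    obtain ⟨m, hm, hme⟩ := hn
    simp only [MulEquiv.coe_toMonoidHom, MulAut.conj_apply] at hme
    have : m = n := mul_left_cancel (mul_right_cancel hme)
    rwa [← this]

lemma subgroupOf_mono' {X : Type*} [Group X] {A B K : Subgroup X} (h : A ≤ B) :
    A.subgroupOf K ≤ B.subgroupOf K := fun x hx => by
  rw [Subgroup.mem_subgroupOf] at hx ⊢
  exact h hx

theorem stmt_9 {X : Type*} [Group X] [Finite X] (S : Subgroup X) [S.Normal]
    (hsimple : IsSimpleGroup S) (hnonab : ∃ a b : S, a * b ≠ b * a)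
    (hcent : Subgroup.centralizer (S : Set X) = ⊥)
    (H : Subgroup X) (hHS : H ≤ S) (hmax : IsCoatom (H.subgroupOf S))
    (hord : ∀ x : X, ∃ s ∈ S, conjSubgroup x H = conjSubgroup s H) :
    IsCoatom (Subgroup.normalizer (H : Set X)) ∧ Subgroup.normalizer (H : Set X) ⊓ S = H := by
  -- key: S is not contained in the normalizer
  have hSN : ¬ S ≤ (Subgroup.normalizer (H : Set X)) := by
    intro hle
    have hnorm : (H.subgroupOf S).Normal := by
      constructor
      intro h hh s
      rw [Subgroup.mem_subgroupOf] at hh ⊢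
      have hs := hle s.2
      rw [Subgroup.mem_normalizer_iff] at hs
      exact (hs (h : X)).mp hh
    rcases hnorm.eq_bot_or_eq_top with hb | ht
    · -- H = ⊥, so ⊥ is a coatom in S, so S is cyclic, contradiction
      rw [Subgroup.subgroupOf_eq_bot] at hb
      have hHbot : H = ⊥ := le_bot_iff.mp (hb le_rfl hHS)
      have hcoatom : IsCoatom (⊥ : Subgroup S) := by
        rw [hHbot, Subgroup.bot_subgroupOf] at hmax
        exact hmax
      obtain ⟨a, b, hab⟩ := hnonab
      have hcyc : IsCyclic S := by
        obtain ⟨g, hg⟩ := exists_ne (1 : S)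
        refine ⟨g, fun x => ?_⟩
        have : Subgroup.zpowers g = ⊤ := by
          apply hcoatom.2
          rw [bot_lt_iff_ne_bot]
          intro h
          exact hg (by simpa [h] using Subgroup.mem_zpowers g)
        exact Subgroup.mem_zpowers_iff.mp (this ▸ Subgroup.mem_top x)
      letI := hcyc
      letI : CommGroup S := IsCyclic.commGroup
      exact hab (mul_comm a b)
    · exact hmax.1 ht
  -- N ∩ S = H
  have hNS : (Subgroup.normalizer (H : Set X)) ⊓ S = H := by
    apply le_antisymm
    · intro x hx
      by_contra hxH
      have hlt : H.subgroupOf S < ((Subgroup.normalizer (H : Set X)) ⊓ S).subgroupOf S := by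
        refine lt_of_le_of_ne (subgroupOf_mono' (le_inf Subgroup.le_normalizer hHS)) ?_
        intro he
        have : (⟨x, hx.2⟩ : S) ∈ ((Subgroup.normalizer (H : Set X)) ⊓ S).subgroupOf S := by
          rw [Subgroup.mem_subgroupOf]; exact hx
        rw [← he, Subgroup.mem_subgroupOf] at this
        exact hxH this
      have := hmax.2 _ hlt
      rw [Subgroup.subgroupOf_eq_top] at this
      exact hSN (le_trans this inf_le_left)
    · exact le_inf Subgroup.le_normalizer hHS
  refine ⟨⟨?_, ?_⟩, hNS⟩
  · intro h
    exact hSN (h ▸ le_top)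
  · intro K hK
    obtain ⟨k, hkK, hkN⟩ := SetLike.exists_of_lt hK
    obtain ⟨s, hsS, hs⟩ := hord k
    have hsk : s⁻¹ * k ∈ (Subgroup.normalizer (H : Set X)) := by
      apply mem_normalizer_of_conjSubgroup_eq
      rw [conjSubgroup_mul, hs, ← conjSubgroup_mul, inv_mul_cancel, conjSubgroup_one]
    have hsK : s ∈ K := by
      have h1 : s⁻¹ * k ∈ K := hK.le hsk
      have : s = k * (s⁻¹ * k)⁻¹ := by group
      rw [this]; exact mul_mem hkK (inv_mem h1)
    have hsN : s ∉ H := by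
      intro hsH
      have : s ∈ (Subgroup.normalizer (H : Set X)) := Subgroup.le_normalizer hsH
      exact hkN (by simpa using mul_mem this hsk)
    -- K ∩ S strictly contains H, so S ≤ K
    have hlt : H.subgroupOf S < (K ⊓ S).subgroupOf S := by
      refine lt_of_le_of_ne
        (subgroupOf_mono' (le_inf (le_trans Subgroup.le_normalizer hK.le) hHS)) ?_
      intro he
      have : (⟨s, hsS⟩ : S) ∈ (K ⊓ S).subgroupOf S := by
        rw [Subgroup.mem_subgroupOf]; exact ⟨hsK, hsS⟩
      rw [← he, Subgroup.mem_subgroupOf] at this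
      exact hsN this
    have hSK : S ≤ K := by
      have := hmax.2 _ hlt
      rw [Subgroup.subgroupOf_eq_top] at this
      exact le_trans this inf_le_left
    rw [eq_top_iff]
    intro x _
    obtain ⟨t, htS, ht⟩ := hord x
    have hxt : t⁻¹ * x ∈ (Subgroup.normalizer (H : Set X)) := by
      apply mem_normalizer_of_conjSubgroup_eq
      rw [conjSubgroup_mul, ht, ← conjSubgroup_mul, inv_mul_cancel, conjSubgroup_one]
    have : x = t * (t⁻¹ * x) := by group
    rw [this]
    exact mul_mem (hSK htS) (hK.le hxt)
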